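/- Let 𝕌 and 𝕐 be standard Borel spaces, let Q be a fixed Borel probability measure on 𝕐, and let ℛ be the set of Borel probability measures P on 𝕌 × 𝕐 whose marginal on 𝕐 equals Q. Then ℛ is convex, and the extreme points of ℛ are exactly the measures of the form P(B) = ∫ 1_{(g(y), y) ∈ B} Q(dy) for some Borel measurable function g : 𝕐 → 𝕌. -/

import Mathlib

open MeasureTheory
open scoped ENNReal NNReal

/-- The set of probability measures on `U × Y` whose second marginal equals `Q`. -/
def fixedMarginalSet (U Y : Type*) [MeasurableSpace U] [MeasurableSpace Y]
    (Q : Measure Y) : Set (Measure (U × Y)) :=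
  {P | IsProbabilityMeasure P ∧ Measure.map Prod.snd P = Q}

open ProbabilityTheory Set in
lemma borkar_exists_decomp_ne {Y U : Type*} [MeasurableSpace Y] [MeasurableSpace U]
    (Q : Measure Y) [IsProbabilityMeasure Q] (κ : Kernel Y U) [IsMarkovKernel κ]
    {A : Set U} (hA : MeasurableSet A) {ε : ℝ≥0∞} (hε0 : ε ≠ 0)
    (hS : Q {y | ε ≤ κ y A ∧ κ y A + ε ≤ 1} ≠ 0) :
    ∃ M₁ M₂ : Measure (Y × U), IsProbabilityMeasure M₁ ∧ IsProbabilityMeasure M₂ ∧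
      M₁.fst = Q ∧ M₂.fst = Q ∧
      (2⁻¹ : ℝ≥0∞) • M₁ + (2⁻¹ : ℝ≥0∞) • M₂ = Q ⊗ₘ κ ∧ M₁ ≠ M₂ := by
  classical
  set S : Set Y := {y | ε ≤ κ y A ∧ κ y A + ε ≤ 1} with hSdef
  have hf : Measurable fun y => κ y A := κ.measurable_coe hA
  have hSm : MeasurableSet S :=
    (hf measurableSet_Ici).inter ((hf.add measurable_const) measurableSet_Iic)
  -- coefficients
  set c₁ : Y → ℝ≥0∞ := fun y => if y ∈ S then 1 + ε * (κ y A)⁻¹ else 1 with hc₁def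
  set d₁ : Y → ℝ≥0∞ := fun y => if y ∈ S then 1 - ε * (κ y Aᶜ)⁻¹ else 1 with hd₁def
  set c₂ : Y → ℝ≥0∞ := fun y => if y ∈ S then 1 - ε * (κ y A)⁻¹ else 1 with hc₂def
  set d₂ : Y → ℝ≥0∞ := fun y => if y ∈ S then 1 + ε * (κ y Aᶜ)⁻¹ else 1 with hd₂def
  have hfc : Measurable fun y => κ y Aᶜ := κ.measurable_coe hA.compl
  have hc₁ : Measurable c₁ := Measurable.ite hSm (measurable_const.add (hf.inv.const_mul ε))
    measurable_const
  have hd₁ : Measurable d₁ := Measurable.ite hSm (measurable_const.sub (hfc.inv.const_mul ε))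
    measurable_const
  have hc₂ : Measurable c₂ := Measurable.ite hSm (measurable_const.sub (hf.inv.const_mul ε))
    measurable_const
  have hd₂ : Measurable d₂ := Measurable.ite hSm (measurable_const.add (hfc.inv.const_mul ε))
    measurable_const
  -- the tilted kernels
  have hTmeas : ∀ c d : Y → ℝ≥0∞, Measurable c → Measurable d →
      Measurable (fun y => c y • (κ y).restrict A + d y • (κ y).restrict Aᶜ) := by
    intro c d hc hd
    apply Measure.measurable_of_measurable_coe
    intro s hs
    simp only [Measure.coe_add, Pi.add_apply, Measure.smul_apply, smul_eq_mul,
      Measure.restrict_apply hs]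
    exact (hc.mul (κ.measurable_coe (hs.inter hA))).add
      (hd.mul (κ.measurable_coe (hs.inter hA.compl)))
  set κ₁ : Kernel Y U := ⟨fun y => c₁ y • (κ y).restrict A + d₁ y • (κ y).restrict Aᶜ,
    hTmeas c₁ d₁ hc₁ hd₁⟩ with hκ₁def
  set κ₂ : Kernel Y U := ⟨fun y => c₂ y • (κ y).restrict A + d₂ y • (κ y).restrict Aᶜ,
    hTmeas c₂ d₂ hc₂ hd₂⟩ with hκ₂def
  have hκ₁app : ∀ (y : Y) (s : Set U), MeasurableSet s →
      κ₁ y s = c₁ y * κ y (s ∩ A) + d₁ y * κ y (s ∩ Aᶜ) := by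
    intro y s hs
    show (c₁ y • (κ y).restrict A + d₁ y • (κ y).restrict Aᶜ) s = _
    simp [Measure.restrict_apply hs]
  have hκ₂app : ∀ (y : Y) (s : Set U), MeasurableSet s →
      κ₂ y s = c₂ y * κ y (s ∩ A) + d₂ y * κ y (s ∩ Aᶜ) := by
    intro y s hs
    show (c₂ y • (κ y).restrict A + d₂ y • (κ y).restrict Aᶜ) s = _
    simp [Measure.restrict_apply hs]
  -- basic facts on S
  have hfacts : ∀ y ∈ S, ε ≤ κ y A ∧ ε ≤ κ y Aᶜ ∧ κ y A ≠ 0 ∧ κ y A ≠ ∞ ∧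
      κ y Aᶜ ≠ 0 ∧ κ y Aᶜ ≠ ∞ ∧ κ y A + κ y Aᶜ = 1 := by
    intro y hy
    haveI : IsProbabilityMeasure (κ y) := IsMarkovKernel.isProbabilityMeasure y
    have hsum : κ y A + κ y Aᶜ = 1 := by
      rw [measure_add_measure_compl hA, measure_univ]
    have hmtop : κ y A ≠ ∞ := measure_ne_top _ _
    have hεm' : ε ≤ κ y Aᶜ := by
      have h2 := hy.2
      rw [← hsum] at h2
      exact (ENNReal.add_le_add_iff_left hmtop).mp h2
    refine ⟨hy.1, hεm', ?_, hmtop, ?_, measure_ne_top _ _, hsum⟩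
    · exact fun h => hε0 (le_antisymm (h ▸ hy.1) zero_le)
    · exact fun h => hε0 (le_antisymm (h ▸ hεm') zero_le)
  -- Markov
  have huniv₁ : ∀ y, κ₁ y Set.univ = 1 := by
    intro y
    rw [hκ₁app y _ MeasurableSet.univ, Set.univ_inter, Set.univ_inter]
    by_cases hy : y ∈ S
    · obtain ⟨hεm, hεm', hm0, hmtop, hm'0, hm'top, hsum⟩ := hfacts y hy
      simp only [hc₁def, hd₁def, if_pos hy]
      rw [add_mul, one_mul, mul_assoc, ENNReal.inv_mul_cancel hm0 hmtop, mul_one,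
        ENNReal.sub_mul (fun _ _ => hm'top), one_mul, mul_assoc,
        ENNReal.inv_mul_cancel hm'0 hm'top, mul_one,
        add_assoc, add_tsub_cancel_of_le hεm', hsum]
    · simp only [hc₁def, hd₁def, if_neg hy, one_mul]
      haveI : IsProbabilityMeasure (κ y) := IsMarkovKernel.isProbabilityMeasure y
      rw [measure_add_measure_compl hA, measure_univ]
  have huniv₂ : ∀ y, κ₂ y Set.univ = 1 := by
    intro y
    rw [hκ₂app y _ MeasurableSet.univ, Set.univ_inter, Set.univ_inter]
    by_cases hy : y ∈ S
    · obtain ⟨hεm, hεm', hm0, hmtop, hm'0, hm'top, hsum⟩ := hfacts y hy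
      simp only [hc₂def, hd₂def, if_pos hy]
      rw [ENNReal.sub_mul (fun _ _ => hmtop), one_mul, mul_assoc,
        ENNReal.inv_mul_cancel hm0 hmtop, mul_one,
        add_mul, one_mul, mul_assoc, ENNReal.inv_mul_cancel hm'0 hm'top, mul_one,
        add_comm (κ y Aᶜ) ε, ← add_assoc,
        tsub_add_cancel_of_le hεm, hsum]
    · simp only [hc₂def, hd₂def, if_neg hy, one_mul]
      haveI : IsProbabilityMeasure (κ y) := IsMarkovKernel.isProbabilityMeasure y
      rw [measure_add_measure_compl hA, measure_univ]
  haveI hM₁ : IsMarkovKernel κ₁ := ⟨fun y => ⟨huniv₁ y⟩⟩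
  haveI hM₂ : IsMarkovKernel κ₂ := ⟨fun y => ⟨huniv₂ y⟩⟩
  -- the half-half decomposition, pointwise
  have hkey : ∀ (y : Y) (s : Set U), MeasurableSet s →
      2⁻¹ * κ₁ y s + 2⁻¹ * κ₂ y s = κ y s := by
    intro y s hs
    rw [hκ₁app y s hs, hκ₂app y s hs]
    have hcd : c₁ y + c₂ y = 2 ∧ d₁ y + d₂ y = 2 := by
      by_cases hy : y ∈ S
      · obtain ⟨hεm, hεm', hm0, hmtop, hm'0, hm'top, hsum⟩ := hfacts y hy
        have hx1 : ε * (κ y A)⁻¹ ≤ 1 := by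
          calc ε * (κ y A)⁻¹ ≤ κ y A * (κ y A)⁻¹ := mul_le_mul_left hεm _
            _ = 1 := ENNReal.mul_inv_cancel hm0 hmtop
        have hx1' : ε * (κ y Aᶜ)⁻¹ ≤ 1 := by
          calc ε * (κ y Aᶜ)⁻¹ ≤ κ y Aᶜ * (κ y Aᶜ)⁻¹ := mul_le_mul_left hεm' _
            _ = 1 := ENNReal.mul_inv_cancel hm'0 hm'top
        constructor
        · simp only [hc₁def, hc₂def, if_pos hy]
          rw [add_assoc, add_tsub_cancel_of_le hx1]; norm_num
        · simp only [hd₁def, hd₂def, if_pos hy]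
          rw [add_comm, add_assoc, add_tsub_cancel_of_le hx1']; norm_num
      · simp only [hc₁def, hc₂def, hd₁def, hd₂def, if_neg hy]; norm_num
    have h2 : (2:ℝ≥0∞)⁻¹ * 2 = 1 := ENNReal.inv_mul_cancel two_ne_zero ENNReal.ofNat_ne_top
    calc 2⁻¹ * (c₁ y * κ y (s ∩ A) + d₁ y * κ y (s ∩ Aᶜ)) +
          2⁻¹ * (c₂ y * κ y (s ∩ A) + d₂ y * κ y (s ∩ Aᶜ))
        = (2⁻¹ * (c₁ y + c₂ y)) * κ y (s ∩ A) + (2⁻¹ * (d₁ y + d₂ y)) * κ y (s ∩ Aᶜ) := by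
          ring
      _ = κ y (s ∩ A) + κ y (s ∩ Aᶜ) := by rw [hcd.1, hcd.2, h2, one_mul, one_mul]
      _ = κ y s := by rw [← Set.diff_eq, measure_inter_add_diff s hA]
  refine ⟨Q ⊗ₘ κ₁, Q ⊗ₘ κ₂, inferInstance, inferInstance,
    Measure.fst_compProd Q κ₁, Measure.fst_compProd Q κ₂, ?_, ?_⟩
  · ext s hs
    rw [Measure.add_apply, Measure.smul_apply, Measure.smul_apply, smul_eq_mul, smul_eq_mul,
      Measure.compProd_apply hs, Measure.compProd_apply hs, Measure.compProd_apply hs,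
      ← lintegral_const_mul 2⁻¹ (Kernel.measurable_kernel_prodMk_left hs),
      ← lintegral_const_mul 2⁻¹ (Kernel.measurable_kernel_prodMk_left hs),
      ← lintegral_add_left ((Kernel.measurable_kernel_prodMk_left hs).const_mul _)]
    exact lintegral_congr fun y => hkey y _ (measurable_prodMk_left hs)
  · -- distinctness
    have hκ₁A : ∀ y ∈ S, κ₁ y A = κ y A + ε := by
      intro y hy
      obtain ⟨hεm, hεm', hm0, hmtop, hm'0, hm'top, hsum⟩ := hfacts y hy
      rw [hκ₁app y A hA, Set.inter_self, Set.inter_compl_self, measure_empty, mul_zero, add_zero]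
      simp only [hc₁def, if_pos hy]
      rw [add_mul, one_mul, mul_assoc, ENNReal.inv_mul_cancel hm0 hmtop, mul_one]
    have hκ₂A : ∀ y ∈ S, κ₂ y A = κ y A - ε := by
      intro y hy
      obtain ⟨hεm, hεm', hm0, hmtop, hm'0, hm'top, hsum⟩ := hfacts y hy
      rw [hκ₂app y A hA, Set.inter_self, Set.inter_compl_self, measure_empty, mul_zero, add_zero]
      simp only [hc₂def, if_pos hy]
      rw [ENNReal.sub_mul (fun _ _ => hmtop), one_mul, mul_assoc,
        ENNReal.inv_mul_cancel hm0 hmtop, mul_one]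
    intro hcontra
    have h₁ : (Q ⊗ₘ κ₁) (S ×ˢ A) = (∫⁻ y in S, κ y A ∂Q) + ε * Q S := by
      rw [Measure.compProd_apply_prod hSm hA,
        setLIntegral_congr_fun hSm hκ₁A,
        lintegral_add_right _ measurable_const, lintegral_const,
        Measure.restrict_apply_univ]
    have h₂ : (Q ⊗ₘ κ₂) (S ×ˢ A) ≤ ∫⁻ y in S, κ y A ∂Q := by
      rw [Measure.compProd_apply_prod hSm hA,
        setLIntegral_congr_fun hSm hκ₂A]
      exact lintegral_mono fun y => tsub_le_self
    have hI_le : (∫⁻ y in S, κ y A ∂Q) ≤ 1 := by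
      calc (∫⁻ y in S, κ y A ∂Q) ≤ ∫⁻ _ in S, 1 ∂Q := by
            refine lintegral_mono fun y => ?_
            haveI : IsProbabilityMeasure (κ y) := IsMarkovKernel.isProbabilityMeasure y
            exact prob_le_one
        _ = Q S := by rw [lintegral_const, Measure.restrict_apply_univ, one_mul]
        _ ≤ 1 := prob_le_one
    have hlt : (∫⁻ y in S, κ y A ∂Q) < (∫⁻ y in S, κ y A ∂Q) + ε * Q S :=
      ENNReal.lt_add_right (hI_le.trans_lt ENNReal.one_lt_top).ne (mul_ne_zero hε0 hS)
    have := h₂.trans_lt (hlt.trans_eq h₁.symm)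
    rw [hcontra] at this
    exact lt_irrefl _ this

open ProbabilityTheory Set in
lemma borkar_eq_dirac_of_rat (μ : Measure ℝ) [IsProbabilityMeasure μ]
    (h01 : ∀ q : ℚ, μ (Iic (q : ℝ)) = 0 ∨ μ (Iic (q : ℝ)) = 1)
    (h2 : μ (Iic (2 : ℝ)) = 1) (h2' : μ (Iic (-2 : ℝ)) = 0) :
    ∃ c : ℝ, μ = Measure.dirac c := by
  classical
  set T : Set ℚ := {q | μ (Iic (q : ℝ)) = 1} with hTdef
  have hT2 : (2 : ℚ) ∈ T := by
    show μ (Iic ((2:ℚ) : ℝ)) = 1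
    norm_num [h2]
  have hTr_ne : (((↑) '' T : Set ℝ)).Nonempty := ⟨(2:ℚ), ⟨2, hT2, by norm_num⟩⟩
  have hTr_bdd : BddBelow ((↑) '' T : Set ℝ) := by
    refine ⟨-2, ?_⟩
    rintro x ⟨q, hq, rfl⟩
    by_contra hlt
    push_neg at hlt
    have : μ (Iic (q : ℝ)) ≤ μ (Iic (-2 : ℝ)) := measure_mono (Iic_subset_Iic.mpr hlt.le)
    rw [h2', hq] at this
    simp at this
  set c : ℝ := sInf ((↑) '' T : Set ℝ) with hcdef
  have hIio : μ (Iio c) = 0 := by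
    have hsub : Iio c ⊆ ⋃ q : {q : ℚ // (q : ℝ) < c}, Iic ((q : ℚ) : ℝ) := by
      intro x hx
      obtain ⟨q, hq1, hq2⟩ := exists_rat_btwn (show x < c from hx)
      exact mem_iUnion.mpr ⟨⟨q, hq2⟩, le_of_lt hq1⟩
    refine le_antisymm ((measure_mono hsub).trans_eq (measure_iUnion_null ?_)) zero_le
    rintro ⟨q, hq⟩
    rcases h01 q with h | h
    · exact h
    · exact absurd (csInf_le hTr_bdd ⟨q, h, rfl⟩) (not_le.mpr hq)
  have hIoi : μ (Ioi c) = 0 := by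
    have hsub : Ioi c ⊆ ⋃ q : T, Ioi ((q : ℚ) : ℝ) := by
      intro x hx
      obtain ⟨t, ⟨q, hq, rfl⟩, hlt⟩ := exists_lt_of_csInf_lt hTr_ne hx
      exact mem_iUnion.mpr ⟨⟨q, hq⟩, hlt⟩
    refine le_antisymm ((measure_mono hsub).trans_eq (measure_iUnion_null ?_)) zero_le
    rintro ⟨q, hq⟩
    have := measure_compl measurableSet_Iic (measure_ne_top μ (Iic (q:ℝ)))
    rw [measure_univ, hq, compl_Iic] at this
    simpa using this
  have hcompl : μ ({c}ᶜ) = 0 := by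
    rw [← Iio_union_Ioi]
    exact measure_union_null hIio hIoi
  have hc1 : μ {c} = 1 := by
    have := measure_add_measure_compl (μ := μ) (measurableSet_singleton c)
    rw [hcompl, add_zero, measure_univ] at this
    exact this
  refine ⟨c, ?_⟩
  ext s hs
  rw [Measure.dirac_apply' _ hs]
  by_cases hcs : c ∈ s
  · rw [indicator_of_mem hcs]
    refine le_antisymm prob_le_one ?_
    calc (1:ℝ≥0∞) = μ {c} := hc1.symm
      _ ≤ μ s := measure_mono (singleton_subset_iff.mpr hcs)
  · rw [indicator_of_notMem hcs]
    refine le_antisymm ?_ zero_le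
    calc μ s ≤ μ ({c}ᶜ) := measure_mono fun x hx => fun h => hcs (h ▸ hx)
      _ = 0 := hcompl

open ProbabilityTheory Set in
/-- Borkar's representation: the set `ℛ` of probability measures on `U × Y` with fixed
`Y`-marginal `Q` is convex, and its extreme points are exactly the measures induced by
deterministic policies, i.e. pushforwards of `Q` under `y ↦ (g y, y)` for measurable
`g : Y → U`. -/
theorem fixedMarginal_convex_and_extreme_points
    {U Y : Type*} [MeasurableSpace U] [StandardBorelSpace U]
    [MeasurableSpace Y] [StandardBorelSpace Y]
    (Q : Measure Y) [IsProbabilityMeasure Q] :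
    (∀ P₁ ∈ fixedMarginalSet U Y Q, ∀ P₂ ∈ fixedMarginalSet U Y Q,
        ∀ a b : ℝ≥0∞, a + b = 1 → a • P₁ + b • P₂ ∈ fixedMarginalSet U Y Q) ∧
    {P ∈ fixedMarginalSet U Y Q |
        ∀ P₁ ∈ fixedMarginalSet U Y Q, ∀ P₂ ∈ fixedMarginalSet U Y Q,
          ∀ a b : ℝ≥0∞, a + b = 1 → a ≠ 0 → b ≠ 0 → P = a • P₁ + b • P₂ → P₁ = P₂}
      = {P | ∃ g : Y → U, Measurable g ∧ P = Measure.map (fun y => (g y, y)) Q} := by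
  classical
  -- a measurable embedding of `U` into `ℝ` with range inside `(-2, 2)`
  set e : U → ℝ := Real.arctan ∘ MeasureTheory.embeddingReal U with hedef
  have hemb : MeasurableEmbedding e :=
    (Real.continuous_arctan.measurableEmbedding Real.arctan_injective).comp
      (MeasureTheory.measurableEmbedding_embeddingReal U)
  have he_lt : ∀ u, e u < 2 := fun u => by
    have := Real.arctan_lt_pi_div_two (MeasureTheory.embeddingReal U u)
    have hpi := Real.pi_lt_d2
    simp only [hedef, Function.comp_apply]
    linarith
  have he_gt : ∀ u, -2 < e u := fun u => by
    have := Real.neg_pi_div_two_lt_arctan (MeasureTheory.embeddingReal U u)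
    have hpi := Real.pi_lt_d2
    simp only [hedef, Function.comp_apply]
    linarith
  constructor
  · -- convexity
    rintro P₁ ⟨h₁p, h₁m⟩ P₂ ⟨h₂p, h₂m⟩ a b hab
    haveI := h₁p; haveI := h₂p
    refine ⟨⟨?_⟩, ?_⟩
    · simp only [Measure.coe_add, Pi.add_apply, Measure.smul_apply, smul_eq_mul,
        measure_univ, mul_one]
      exact hab
    · rw [Measure.map_add _ _ measurable_snd, Measure.map_smul, Measure.map_smul,
        h₁m, h₂m, ← add_smul, hab, one_smul]
  · ext P
    simp only [Set.mem_setOf_eq, Set.mem_sep_iff]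
    constructor
    · -- extreme point ⇒ deterministic
      rintro ⟨⟨hPp, hPm⟩, hext⟩
      haveI := hPp
      haveI hU : Nonempty U := by
        by_contra h
        rw [not_nonempty_iff] at h
        haveI : IsEmpty (U × Y) := ⟨fun p => h.false p.1⟩
        have h1 : P Set.univ = 1 := measure_univ
        rw [Set.univ_eq_empty_iff.mpr inferInstance, measure_empty] at h1
        exact zero_ne_one h1
      set ρ : Measure (Y × U) := P.map Prod.swap with hρdef
      haveI : IsProbabilityMeasure ρ := Measure.isProbabilityMeasure_map measurable_swap.aemeasurable
      have hρfst : ρ.fst = Q := by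
        rw [hρdef, Measure.fst_map_swap]
        exact hPm
      set κ : Kernel Y U := ρ.condKernel with hκdef
      have hdis : Q ⊗ₘ κ = ρ := by
        have := ρ.disintegrate ρ.condKernel
        rwa [hρfst] at this
      have hPρ : P = ρ.map Prod.swap := by
        rw [hρdef, Measure.map_map measurable_swap measurable_swap, Prod.swap_swap_eq,
          Measure.map_id]
      -- every measurable set has conditional probability 0 or 1 a.e.
      have h01 : ∀ A : Set U, MeasurableSet A → ∀ᵐ y ∂Q, κ y A = 0 ∨ κ y A = 1 := by
        intro A hA
        by_contra hcon
        rw [ae_iff] at hcon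
        have hcover : {y | ¬(κ y A = 0 ∨ κ y A = 1)} ⊆
            ⋃ n : ℕ, {y | ((n : ℝ≥0∞) + 1)⁻¹ ≤ κ y A ∧ κ y A + ((n : ℝ≥0∞) + 1)⁻¹ ≤ 1} := by
          intro y hy
          push_neg at hy
          obtain ⟨h0, h1⟩ := hy
          haveI : IsProbabilityMeasure (κ y) := IsMarkovKernel.isProbabilityMeasure y
          have hle1 : κ y A ≤ 1 := prob_le_one
          have hlt1 : κ y A < 1 := lt_of_le_of_ne hle1 h1
          obtain ⟨n₁, hn₁⟩ := ENNReal.exists_inv_nat_lt h0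
          obtain ⟨n₂, hn₂⟩ := ENNReal.exists_inv_nat_lt (tsub_pos_of_lt hlt1).ne'
          refine Set.mem_iUnion.mpr ⟨n₁ + n₂, ?_, ?_⟩
          · calc (((n₁ + n₂ : ℕ) : ℝ≥0∞) + 1)⁻¹ ≤ ((n₁ : ℝ≥0∞))⁻¹ := by
                  refine ENNReal.inv_le_inv' ?_
                  exact_mod_cast show (n₁ : ℕ) ≤ n₁ + n₂ + 1 by omega
              _ ≤ κ y A := hn₁.le
          · have hc : (((n₁ + n₂ : ℕ) : ℝ≥0∞) + 1)⁻¹ ≤ 1 - κ y A := by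
              calc (((n₁ + n₂ : ℕ) : ℝ≥0∞) + 1)⁻¹ ≤ ((n₂ : ℝ≥0∞))⁻¹ := by
                    refine ENNReal.inv_le_inv' ?_
                    exact_mod_cast show (n₂ : ℕ) ≤ n₁ + n₂ + 1 by omega
                _ ≤ 1 - κ y A := hn₂.le
            calc κ y A + (((n₁ + n₂ : ℕ) : ℝ≥0∞) + 1)⁻¹ ≤ κ y A + (1 - κ y A) :=
                  add_le_add_right hc _
              _ = 1 := add_tsub_cancel_of_le hle1
        have hex : ∃ n : ℕ,
            Q {y | ((n : ℝ≥0∞) + 1)⁻¹ ≤ κ y A ∧ κ y A + ((n : ℝ≥0∞) + 1)⁻¹ ≤ 1} ≠ 0 := by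
          by_contra hall
          push_neg at hall
          exact hcon (le_antisymm ((measure_mono hcover).trans_eq
            (measure_iUnion_null hall)) zero_le)
        obtain ⟨n, hn⟩ := hex
        have hε0 : ((n : ℝ≥0∞) + 1)⁻¹ ≠ 0 :=
          ENNReal.inv_ne_zero.mpr (by simp [ENNReal.add_eq_top])
        obtain ⟨M₁, M₂, h₁p, h₂p, h₁f, h₂f, hhalf, hne'⟩ :=
          borkar_exists_decomp_ne Q κ hA hε0 hn
        haveI := h₁p; haveI := h₂p
        apply hne'
        have hmem : ∀ M : Measure (Y × U), IsProbabilityMeasure M → M.fst = Q →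
            M.map Prod.swap ∈ fixedMarginalSet U Y Q := by
          intro M hM hMf
          refine ⟨Measure.isProbabilityMeasure_map measurable_swap.aemeasurable, ?_⟩
          show (M.map Prod.swap).snd = Q
          rw [Measure.snd_map_swap]
          exact hMf
        have hPeq : P = (2⁻¹ : ℝ≥0∞) • (M₁.map Prod.swap) + (2⁻¹ : ℝ≥0∞) • (M₂.map Prod.swap) := by
          rw [hPρ, ← hdis, ← hhalf, Measure.map_add _ _ measurable_swap,
            Measure.map_smul, Measure.map_smul]
        have h2ne : (2⁻¹ : ℝ≥0∞) ≠ 0 := by simp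
        have := hext (M₁.map Prod.swap) (hmem M₁ h₁p h₁f) (M₂.map Prod.swap)
          (hmem M₂ h₂p h₂f) (2⁻¹ : ℝ≥0∞) (2⁻¹ : ℝ≥0∞) ENNReal.inv_two_add_inv_two h2ne h2ne hPeq
        have := congrArg (Measure.map Prod.swap) this
        rwa [Measure.map_map measurable_swap measurable_swap,
          Measure.map_map measurable_swap measurable_swap, Prod.swap_swap_eq,
          Measure.map_id, Measure.map_id] at this
      -- hence a.e. the conditional kernel is Dirac
      have h_ae : ∀ᵐ y ∂Q, ∀ q : ℚ, κ y (e ⁻¹' Iic (q : ℝ)) = 0 ∨ κ y (e ⁻¹' Iic (q : ℝ)) = 1 :=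
        (ae_all_iff).mpr fun q => h01 _ (hemb.measurable measurableSet_Iic)
      set g₀ : Y → ℝ := fun y => ∫ u, e u ∂(κ y) with hg₀def
      have hg₀ : Measurable g₀ := by
        have hsm : StronglyMeasurable (Function.uncurry fun (_ : Y) (u : U) => e u) :=
          (hemb.measurable.comp measurable_snd).stronglyMeasurable
        exact (hsm.integral_kernel_prod_right (κ := κ)).measurable
      obtain ⟨g', hg', hg'e⟩ := hemb.exists_measurable_extend measurable_id fun _ => hU
      set g : Y → U := g' ∘ g₀ with hgdef
      have hg : Measurable g := hg'.comp hg₀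
      have h_dirac : ∀ᵐ y ∂Q, κ y = Measure.dirac (g y) := by
        filter_upwards [h_ae] with y hy
        haveI : IsProbabilityMeasure (κ y) := IsMarkovKernel.isProbabilityMeasure y
        set μ : Measure ℝ := (κ y).map e with hμdef
        haveI : IsProbabilityMeasure μ := Measure.isProbabilityMeasure_map hemb.measurable.aemeasurable
        have h01' : ∀ q : ℚ, μ (Iic (q : ℝ)) = 0 ∨ μ (Iic (q : ℝ)) = 1 := fun q => by
          rw [hμdef, Measure.map_apply hemb.measurable measurableSet_Iic]
          exact hy q
        have hIic2 : μ (Iic (2 : ℝ)) = 1 := by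
          rw [hμdef, Measure.map_apply hemb.measurable measurableSet_Iic]
          have huniv : e ⁻¹' Iic (2 : ℝ) = Set.univ :=
            Set.eq_univ_of_forall fun u => Set.mem_preimage.mpr (Set.mem_Iic.mpr (he_lt u).le)
          rw [huniv]
          exact measure_univ
        have hIicneg : μ (Iic (-2 : ℝ)) = 0 := by
          rw [hμdef, Measure.map_apply hemb.measurable measurableSet_Iic]
          have hempty : e ⁻¹' Iic (-2 : ℝ) = (∅ : Set U) :=
            Set.eq_empty_iff_forall_notMem.mpr fun u hu =>
              absurd (he_gt u) (not_lt.mpr (Set.mem_Iic.mp hu))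
          rw [hempty]
          exact measure_empty
        obtain ⟨c, hc⟩ := borkar_eq_dirac_of_rat μ h01' hIic2 hIicneg
        have hcmem : c ∈ Set.range e := by
          have h1 : μ (Set.range e) = 1 := by
            rw [hμdef, Measure.map_apply hemb.measurable hemb.measurableSet_range,
              Set.preimage_range]
            exact measure_univ
          rw [hc, Measure.dirac_apply' _ hemb.measurableSet_range] at h1
          by_contra hcm
          rw [Set.indicator_of_notMem hcm] at h1
          exact zero_ne_one h1
        obtain ⟨u, hu⟩ := hcmem
        have hgy : g y = u := by
          have hc' : g₀ y = c := by
            have hint : ∫ x, x ∂μ = g₀ y :=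
              integral_map hemb.measurable.aemeasurable aestronglyMeasurable_id
            rw [← hint, hc, integral_dirac]
          rw [hgdef, Function.comp_apply, hc', ← hu]
          exact congrFun hg'e u
        rw [hgy]
        ext B hB
        have himg : MeasurableSet (e '' B) := hemb.measurableSet_image.mpr hB
        have hκB : κ y B = μ (e '' B) := by
          rw [hμdef, Measure.map_apply hemb.measurable himg, hemb.injective.preimage_image]
        rw [hκB, hc, Measure.dirac_apply' _ himg, Measure.dirac_apply' _ hB, ← hu]
        by_cases hub : u ∈ B <;>
          simp [Set.indicator_apply, hub, hemb.injective.mem_set_image]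
      refine ⟨g, hg, ?_⟩
      have hφ : Measurable fun y => (g y, y) := hg.prodMk measurable_id
      have hκdet : Q ⊗ₘ κ = Q ⊗ₘ Kernel.deterministic g hg :=
        Measure.compProd_congr (by
          filter_upwards [h_dirac] with y hy
          rw [hy, Kernel.deterministic_apply])
      rw [hPρ, ← hdis, hκdet]
      ext s hs
      rw [Measure.map_apply measurable_swap hs,
        Measure.compProd_apply (measurable_swap hs),
        Measure.map_apply hφ hs]
      calc ∫⁻ y, (Kernel.deterministic g hg) y (Prod.mk y ⁻¹' (Prod.swap ⁻¹' s)) ∂Q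
          = ∫⁻ y, ((fun y => (g y, y)) ⁻¹' s).indicator 1 y ∂Q := by
            refine lintegral_congr fun y => ?_
            rw [Kernel.deterministic_apply' hg _
              (measurable_prodMk_left (measurable_swap hs))]
            by_cases hmem : (g y, y) ∈ s <;>
              simp [Set.indicator_apply, hmem]
        _ = Q ((fun y => (g y, y)) ⁻¹' s) := lintegral_indicator_one (hφ hs)
    · -- deterministic ⇒ extreme point
      rintro ⟨g, hg, rfl⟩
      have hφ : Measurable fun y => (g y, y) := hg.prodMk measurable_id
      have hmemP : Measure.map (fun y => (g y, y)) Q ∈ fixedMarginalSet U Y Q := by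
        refine ⟨Measure.isProbabilityMeasure_map hφ.aemeasurable, ?_⟩
        rw [Measure.map_map measurable_snd hφ]
        exact Measure.map_id
      refine ⟨hmemP, ?_⟩
      rintro P₁ ⟨h₁p, h₁m⟩ P₂ ⟨h₂p, h₂m⟩ a b hab ha hb heq
      haveI := h₁p; haveI := h₂p
      haveI : IsProbabilityMeasure (Measure.map (fun y => (g y, y)) Q) := hmemP.1
      set G : Set (U × Y) := {p | e p.1 = e (g p.2)} with hGdef
      have hG : MeasurableSet G :=
        measurableSet_eq_fun (hemb.measurable.comp measurable_fst)
          (hemb.measurable.comp (hg.comp measurable_snd))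
      have hPG : Measure.map (fun y => (g y, y)) Q G = 1 := by
        rw [Measure.map_apply hφ hG]
        have : (fun y => (g y, y)) ⁻¹' G = Set.univ :=
          Set.eq_univ_of_forall fun y => rfl
        rw [this]; exact measure_univ
      have haneinf : a ≠ ∞ := fun h => by simp [h] at hab
      have hbneinf : b ≠ ∞ := fun h => by simp [h] at hab
      have hG1 : P₁ G = 1 ∧ P₂ G = 1 := by
        have hsum : a * P₁ G + b * P₂ G = 1 := by
          rw [← hPG, heq]
          simp [Measure.smul_apply, smul_eq_mul]
        constructor
        · by_contra h1
          have hlt : P₁ G < 1 := lt_of_le_of_ne prob_le_one h1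
          have hstrict : a * P₁ G + b * P₂ G < 1 := by
            calc a * P₁ G + b * P₂ G < a * 1 + b * 1 :=
                ENNReal.add_lt_add_of_lt_of_le
                  (ENNReal.mul_ne_top hbneinf (measure_ne_top _ _))
                  ((ENNReal.mul_lt_mul_iff_right ha haneinf).mpr hlt)
                  (mul_le_mul_right prob_le_one b)
              _ = 1 := by rw [mul_one, mul_one, hab]
          rw [hsum] at hstrict
          exact lt_irrefl _ hstrict
        · by_contra h1
          have hlt : P₂ G < 1 := lt_of_le_of_ne prob_le_one h1
          have hstrict : a * P₁ G + b * P₂ G < 1 := by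
            calc a * P₁ G + b * P₂ G < a * 1 + b * 1 :=
                ENNReal.add_lt_add_of_le_of_lt
                  (ENNReal.mul_ne_top haneinf (measure_ne_top _ _))
                  (mul_le_mul_right prob_le_one a)
                  ((ENNReal.mul_lt_mul_iff_right hb hbneinf).mpr hlt)
              _ = 1 := by rw [mul_one, mul_one, hab]
          rw [hsum] at hstrict
          exact lt_irrefl _ hstrict
      have huniq : ∀ P' : Measure (U × Y), IsProbabilityMeasure P' →
          Measure.map Prod.snd P' = Q → P' G = 1 →
          P' = Measure.map (fun y => (g y, y)) Q := by
        intro P' h' hm' hG'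
        haveI := h'
        have hGc : P' Gᶜ = 0 := by
          have := measure_compl (μ := P') hG (measure_ne_top _ _)
          rw [measure_univ, hG'] at this
          simpa using this
        ext s hs
        have hTm : MeasurableSet ((fun y => (g y, y)) ⁻¹' s) := hφ hs
        have hsG : s ∩ G = Prod.snd ⁻¹' ((fun y => (g y, y)) ⁻¹' s) ∩ G := by
          ext ⟨u, y⟩
          simp only [Set.mem_inter_iff, Set.mem_preimage, hGdef, Set.mem_setOf_eq,
            hemb.injective.eq_iff]
          constructor
          · rintro ⟨hs', he'⟩
            exact ⟨he' ▸ hs', he'⟩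
          · rintro ⟨hs', he'⟩
            exact ⟨he' ▸ hs', he'⟩
        calc P' s = P' (s ∩ G) := (measure_inter_conull hGc).symm
          _ = P' (Prod.snd ⁻¹' ((fun y => (g y, y)) ⁻¹' s) ∩ G) := by rw [hsG]
          _ = P' (Prod.snd ⁻¹' ((fun y => (g y, y)) ⁻¹' s)) := measure_inter_conull hGc
          _ = Q ((fun y => (g y, y)) ⁻¹' s) := by
              rw [← hm', Measure.map_apply measurable_snd hTm]
          _ = Measure.map (fun y => (g y, y)) Q s := (Measure.map_apply hφ hs).symm
      rw [huniq P₁ h₁p h₁m hG1.1, huniq P₂ h₂p h₂m hG1.2]
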